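/- Let E be a real Banach space, R > 0, σ ∈ [0, 1/4], 0 ≤ τ ≤ σ/10, and 0 ≤ ρ ≤ (1−σ)R. Let b be a function assigning to every r with ρ ≤ r ≤ (1−σ)R and r > 0 a point b(r) ∈ E, and suppose ‖b(r) − b(s)‖ ≤ 5τ·max(r, s) for all such r, s. Let a ∈ E and suppose that the closed ball B̄(b(r), r) is contained in the closed ball B̄(a, R) for every r with ρ ≤ r ≤ (1−σ)R, r > 0. Then: (i) ‖b(r) − a‖ ≤ 2σR for every such r; (ii) for every R' with 0 < R' ≤ (1−2σ)R and every r with ρ ≤ r ≤ (1−σ)R' and r > 0, one has B̄(b(r), R') ⊆ B̄(a, R), and B̄(b(s), s) ⊆ B̄(b(r), R') for every s with ρ ≤ s ≤ (1−σ)R' and s > 0. -/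

import Mathlib

open Metric

lemma ball_incl_norm {E : Type*} [NormedAddCommGroup E] [NormedSpace ℝ E]
    {c a : E} {r R : ℝ} (hr : 0 ≤ r) (hrR : r ≤ R)
    (h : closedBall c r ⊆ closedBall a R) : ‖c - a‖ ≤ R - r := by
  by_cases hv : c - a = 0
  · rw [hv, norm_zero]; linarith
  · have hvn : 0 < ‖c - a‖ := norm_pos_iff.mpr hv
    set t := r / ‖c - a‖ with ht
    have ht0 : 0 ≤ t := div_nonneg hr hvn.le
    have hx : c + t • (c - a) ∈ closedBall c r := by
      simp only [mem_closedBall, dist_eq_norm, add_sub_cancel_left, norm_smul,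
        Real.norm_eq_abs, abs_of_nonneg ht0, ht]
      rw [abs_of_nonneg (div_nonneg hr hvn.le), div_mul_cancel₀ _ hvn.ne']
    have h2 := h hx
    rw [mem_closedBall, dist_eq_norm] at h2
    have heq : c + t • (c - a) - a = (1 + t) • (c - a) := by
      rw [add_smul, one_smul]; abel
    rw [heq, norm_smul, Real.norm_eq_abs, abs_of_nonneg (by linarith)] at h2
    have : t * ‖c - a‖ = r := div_mul_cancel₀ _ hvn.ne'
    nlinarith

/-- recentering of weak-cone regions, ball inclusions of
Lemma 3.4, Item (2): if the centers `b(r)` satisfy the chaining estimate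
`‖b(r) − b(s)‖ ≤ 5τ·max(r, s)` and each ball `B̄(b(r), r)` lies in `B̄(a, R)`,
then `‖b(r) − a‖ ≤ 2σR`, and for `R' ≤ (1−2σ)R` one has
`B̄(b(r), R') ⊆ B̄(a, R)` whenever `ρ ≤ r ≤ (1−σ)R'`, together with
`B̄(b(s), s) ⊆ B̄(b(r), R')` for every `ρ ≤ s ≤ (1−σ)R'`. -/
theorem weak_cone_recenter_balls
    {E : Type*} [NormedAddCommGroup E] [NormedSpace ℝ E] [CompleteSpace E]
    (R σ τ ρ : ℝ) (hR : 0 < R) (hσ0 : 0 ≤ σ) (hσ : σ ≤ 1 / 4)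
    (hτ0 : 0 ≤ τ) (hτ : τ ≤ σ / 10) (hρ0 : 0 ≤ ρ) (hρ : ρ ≤ (1 - σ) * R)
    (b : ℝ → E)
    (hchain : ∀ r s : ℝ, ρ ≤ r → r ≤ (1 - σ) * R → 0 < r →
      ρ ≤ s → s ≤ (1 - σ) * R → 0 < s → ‖b r - b s‖ ≤ 5 * τ * max r s)
    (a : E)
    (hball : ∀ r : ℝ, ρ ≤ r → r ≤ (1 - σ) * R → 0 < r →
      closedBall (b r) r ⊆ closedBall a R) :
    (∀ r : ℝ, ρ ≤ r → r ≤ (1 - σ) * R → 0 < r → ‖b r - a‖ ≤ 2 * σ * R) ∧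
    (∀ R' : ℝ, 0 < R' → R' ≤ (1 - 2 * σ) * R →
      ∀ r : ℝ, ρ ≤ r → r ≤ (1 - σ) * R' → 0 < r →
        closedBall (b r) R' ⊆ closedBall a R ∧
        ∀ s : ℝ, ρ ≤ s → s ≤ (1 - σ) * R' → 0 < s →
          closedBall (b s) s ⊆ closedBall (b r) R') := by
  have hr0pos : 0 < (1 - σ) * R := by nlinarith
  -- norm bound at the top radius r₀ = (1-σ)R
  have htop : ‖b ((1 - σ) * R) - a‖ ≤ R - (1 - σ) * R :=
    ball_incl_norm hr0pos.le (by nlinarith)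
      (hball _ hρ le_rfl hr0pos)
  have key : ∀ r : ℝ, ρ ≤ r → r ≤ (1 - σ) * R → 0 < r → ‖b r - a‖ ≤ 2 * σ * R := by
    intro r hρr hr1 hr2
    have hch := hchain r ((1 - σ) * R) hρr hr1 hr2 hρ le_rfl hr0pos
    have hmax : max r ((1 - σ) * R) = (1 - σ) * R := max_eq_right hr1
    rw [hmax] at hch
    calc ‖b r - a‖ ≤ ‖b r - b ((1 - σ) * R)‖ + ‖b ((1 - σ) * R) - a‖ :=
          norm_sub_le_norm_sub_add_norm_sub _ _ _
      _ ≤ 5 * τ * ((1 - σ) * R) + (R - (1 - σ) * R) := add_le_add hch htop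
      _ ≤ 2 * σ * R := by
          nlinarith [mul_nonneg (sub_nonneg.mpr hτ) hr0pos.le,
            mul_nonneg (mul_nonneg hσ0 hσ0) hR.le]
  refine ⟨key, ?_⟩
  intro R' hR'0 hR'le r hρr hr1 hr2
  have hrR : r ≤ (1 - σ) * R := by nlinarith
  constructor
  · -- closedBall (b r) R' ⊆ closedBall a R
    apply closedBall_subset_closedBall'
    have := key r hρr hrR hr2
    rw [dist_eq_norm]
    linarith
  · intro s hρs hs1 hs2
    have hsR : s ≤ (1 - σ) * R := by nlinarith
    apply closedBall_subset_closedBall'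
    have hch := hchain s r hρs hsR hs2 hρr hrR hr2
    have hmax : max s r ≤ (1 - σ) * R' := max_le hs1 hr1
    have h5τ : 5 * τ * max s r ≤ 5 * τ * ((1 - σ) * R') := by
      apply mul_le_mul_of_nonneg_left hmax (by linarith)
    rw [dist_eq_norm]
    nlinarith [mul_nonneg (sub_nonneg.mpr hτ)
        (mul_nonneg (by linarith : (0:ℝ) ≤ 1 - σ) hR'0.le),
      mul_nonneg (mul_nonneg hσ0 hσ0) hR'0.le]
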